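/- If Z ~ Gamma(α, β) with α, β > 0, then Var(log Z) = ψ₁(α), the trigamma function evaluated at α. -/

import Mathlib

open MeasureTheory

noncomputable def gammaPDF (α β z : ℝ) : ℝ :=
  z ^ (α - 1) * Real.exp (-z / β) / (Real.Gamma α * β ^ α)

noncomputable def digamma (x : ℝ) : ℝ := deriv (fun y : ℝ => Real.log (Real.Gamma y)) x

noncomputable def trigamma (x : ℝ) : ℝ := deriv digamma x

open Set Filter Asymptotics Topology

noncomputable def fk (k : ℕ) (t : ℝ) : ℂ := ((Real.log t ^ k * Real.exp (-t) : ℝ) : ℂ)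

noncomputable def G (k : ℕ) (x : ℝ) : ℝ :=
  ∫ t in Set.Ioi (0:ℝ), Real.log t ^ k * t ^ (x - 1) * Real.exp (-t)

lemma fk_succ (k : ℕ) : (fun t => Real.log t • fk k t) = fk (k + 1) := by
  funext t
  simp only [fk, Complex.real_smul, pow_succ]
  push_cast
  ring

lemma fk_cont (k : ℕ) : ContinuousOn (fk k) (Set.Ioi 0) := by
  apply Complex.continuous_ofReal.comp_continuousOn
  exact ((Real.continuousOn_log.mono (by simp [Set.subset_compl_singleton_iff])).pow k).mul
    (Real.continuous_exp.comp continuous_neg).continuousOn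

lemma fk_loc (k : ℕ) : LocallyIntegrableOn (fk k) (Set.Ioi 0) :=
  (fk_cont k).locallyIntegrableOn measurableSet_Ioi

lemma fk_top (k : ℕ) (a : ℝ) : fk k =O[atTop] (· ^ (-a)) := by
  induction k generalizing a with
  | zero =>
    rw [← isBigO_norm_left]
    simp only [fk, pow_zero, one_mul, Complex.norm_real,
      ← Real.norm_eq_abs]
    rw [isBigO_norm_left]
    simpa only [neg_one_mul] using (isLittleO_exp_neg_mul_rpow_atTop zero_lt_one _).isBigO
  | succ k ih =>
    rw [← fk_succ]
    exact isBigO_rpow_top_log_smul (lt_add_one a) (ih (a + 1))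

lemma fk0_zero : fk 0 =O[𝓝[>] (0:ℝ)] (· ^ (-(0:ℝ))) := by
  simp_rw [neg_zero, Real.rpow_zero]
  refine isBigO_const_of_tendsto (?_ : Tendsto _ _ (𝓝 ((1:ℝ) : ℂ))) one_ne_zero
  have : Continuous (fk 0) := by
    show Continuous fun t => ((Real.log t ^ 0 * Real.exp (-t) : ℝ) : ℂ)
    simp only [pow_zero, one_mul]
    exact Complex.continuous_ofReal.comp (Real.continuous_exp.comp continuous_neg)
  have h1 : fk 0 0 = ((1:ℝ) : ℂ) := by simp [fk]
  rw [← h1]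
  exact (this.tendsto 0).mono_left nhdsWithin_le_nhds

lemma fk_zero (k : ℕ) {b : ℝ} (hb : 0 < b) : fk k =O[𝓝[>] (0:ℝ)] (· ^ (-b)) := by
  induction k generalizing b with
  | zero =>
    refine fk0_zero.trans (IsBigO.of_bound 1 ?_)
    filter_upwards [Ioo_mem_nhdsGT_of_mem (by simp : (0:ℝ) ∈ Set.Ico 0 1)] with t ht
    simp only [neg_zero, Real.rpow_zero, norm_one, one_mul, Real.norm_eq_abs]
    rw [abs_of_pos (Real.rpow_pos_of_pos ht.1 _)]
    calc (1:ℝ) = t ^ (0:ℝ) := by rw [Real.rpow_zero]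
    _ ≤ t ^ (-b) := Real.rpow_le_rpow_of_exponent_ge ht.1 ht.2.le (by linarith)
  | succ k ih =>
    rw [← fk_succ]
    exact isBigO_rpow_zero_log_smul (half_lt_self hb) (ih (half_pos hb))

lemma ofReal_integrand {x : ℝ} (k : ℕ) {t : ℝ} (ht : t ∈ Set.Ioi (0:ℝ)) :
    ((Real.log t ^ k * t ^ (x - 1) * Real.exp (-t) : ℝ) : ℂ)
      = ((t : ℂ) ^ ((x : ℂ) - 1)) • fk k t := by
  rw [show ((x:ℂ) - 1) = ((x - 1 : ℝ) : ℂ) by push_cast; ring,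
    ← Complex.ofReal_cpow (le_of_lt ht)]
  simp only [fk, smul_eq_mul]
  push_cast
  ring

lemma mellin_fk (k : ℕ) (x : ℝ) : mellin (fk k) (x : ℂ) = ((G k x : ℝ) : ℂ) := by
  rw [mellin,
    setIntegral_congr_fun measurableSet_Ioi fun t ht => (ofReal_integrand (x := x) k ht).symm]
  exact integral_ofReal

lemma fk_conv (k : ℕ) {x : ℝ} (hx : 0 < x) : MellinConvergent (fk k) (x : ℂ) := by
  cases k with
  | zero =>
    exact mellinConvergent_of_isBigO_rpow (fk_loc 0) (fk_top 0 (x+1))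
      (by simp only [Complex.ofReal_re]; linarith) fk0_zero (by simp [hx])
  | succ k =>
    exact mellinConvergent_of_isBigO_rpow (fk_loc _) (fk_top _ (x+1))
      (by simp only [Complex.ofReal_re]; linarith) (fk_zero _ (half_pos hx)) (by simp; linarith [half_lt_self hx])

lemma integrable_G (k : ℕ) {x : ℝ} (hx : 0 < x) :
    IntegrableOn (fun t => Real.log t ^ k * t ^ (x - 1) * Real.exp (-t)) (Set.Ioi 0) := by
  refine ((fk_conv k hx).re).congr ?_
  filter_upwards [ae_restrict_mem measurableSet_Ioi] with t ht
  rw [← ofReal_integrand k ht]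
  exact RCLike.ofReal_re _

lemma G_hasDeriv (k : ℕ) {x : ℝ} (hx : 0 < x) : HasDerivAt (G k) (G (k+1) x) x := by
  have H : HasDerivAt (mellin (fk k)) (mellin (fk (k+1)) (x:ℂ)) (x:ℂ) := by
    rw [← fk_succ]
    cases k with
    | zero =>
      exact (mellin_hasDerivAt_of_isBigO_rpow (fk_loc 0) (fk_top 0 (x+1))
        (by simp only [Complex.ofReal_re]; linarith) fk0_zero (by simp [hx])).2
    | succ k =>
      exact (mellin_hasDerivAt_of_isBigO_rpow (fk_loc _) (fk_top _ (x+1))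
        (by simp only [Complex.ofReal_re]; linarith) (fk_zero _ (half_pos hx))
        (by simp; linarith [half_lt_self hx])).2
  have H4 := H.real_of_complex
  have he : (fun y : ℝ => (mellin (fk k) (y:ℂ)).re) = G k := by
    funext y; rw [mellin_fk]; simp
  rw [he, mellin_fk] at H4
  simpa using H4

lemma G0_eq_Gamma {x : ℝ} (hx : 0 < x) : G 0 x = Real.Gamma x := by
  rw [Real.Gamma_eq_integral hx, G]
  refine setIntegral_congr_fun measurableSet_Ioi fun t ht => ?_
  simp [pow_zero, one_mul, mul_comm]

lemma Gamma_hasDeriv {x : ℝ} (hx : 0 < x) : HasDerivAt Real.Gamma (G 1 x) x := by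
  refine (G_hasDeriv 0 hx).congr_of_eventuallyEq ?_
  filter_upwards [isOpen_Ioi.mem_nhds hx] with y hy
  exact (G0_eq_Gamma hy).symm

lemma digamma_eq {x : ℝ} (hx : 0 < x) : digamma x = G 1 x / Real.Gamma x :=
  ((Gamma_hasDeriv hx).log (Real.Gamma_pos_of_pos hx).ne').deriv

lemma trigamma_eq {x : ℝ} (hx : 0 < x) :
    trigamma x = (G 2 x * Real.Gamma x - G 1 x * G 1 x) / Real.Gamma x ^ 2 := by
  have hdiv : HasDerivAt (fun y => G 1 y / Real.Gamma y)
      ((G 2 x * Real.Gamma x - G 1 x * G 1 x) / Real.Gamma x ^ 2) x :=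
    (G_hasDeriv 1 hx).div (Gamma_hasDeriv hx) (Real.Gamma_pos_of_pos hx).ne'
  have hd : HasDerivAt digamma
      ((G 2 x * Real.Gamma x - G 1 x * G 1 x) / Real.Gamma x ^ 2) x := by
    refine hdiv.congr_of_eventuallyEq ?_
    filter_upwards [isOpen_Ioi.mem_nhds hx] with y hy
    exact digamma_eq hy
  exact hd.deriv

lemma J1 (L : ℝ) {α : ℝ} (hα : 0 < α) :
    (∫ t in Set.Ioi (0:ℝ), (L + Real.log t) * t ^ (α - 1) * Real.exp (-t))
      = L * G 0 α + G 1 α := by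
  have e : ∀ t : ℝ, (L + Real.log t) * t ^ (α - 1) * Real.exp (-t)
      = L * (Real.log t ^ 0 * t ^ (α - 1) * Real.exp (-t))
        + Real.log t ^ 1 * t ^ (α - 1) * Real.exp (-t) := fun t => by ring
  simp_rw [e]
  rw [integral_add ((integrable_G 0 hα).const_mul L) (integrable_G 1 hα),
    integral_const_mul _]
  rfl

lemma J2 (L : ℝ) {α : ℝ} (hα : 0 < α) :
    (∫ t in Set.Ioi (0:ℝ), (L + Real.log t) ^ 2 * t ^ (α - 1) * Real.exp (-t))
      = L ^ 2 * G 0 α + 2 * L * G 1 α + G 2 α := by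
  have e : ∀ t : ℝ, (L + Real.log t) ^ 2 * t ^ (α - 1) * Real.exp (-t)
      = (L ^ 2 * (Real.log t ^ 0 * t ^ (α - 1) * Real.exp (-t))
        + 2 * L * (Real.log t ^ 1 * t ^ (α - 1) * Real.exp (-t)))
        + Real.log t ^ 2 * t ^ (α - 1) * Real.exp (-t) := fun t => by ring
  simp_rw [e]
  have iadd : Integrable (fun t => L ^ 2 * (Real.log t ^ 0 * t ^ (α - 1) * Real.exp (-t))
      + 2 * L * (Real.log t ^ 1 * t ^ (α - 1) * Real.exp (-t)))
      (volume.restrict (Set.Ioi 0)) :=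
    ((integrable_G 0 hα).const_mul (L ^ 2)).add ((integrable_G 1 hα).const_mul (2 * L))
  rw [integral_add iadd (integrable_G 2 hα),
    integral_add ((integrable_G 0 hα).const_mul _) ((integrable_G 1 hα).const_mul _),
    integral_const_mul _, integral_const_mul _]
  rfl

lemma int_eq (α β : ℝ) (hα : 0 < α) (hβ : 0 < β) (k : ℕ) :
    (∫ z in Set.Ioi (0:ℝ), Real.log z ^ k * gammaPDF α β z)
      = (∫ t in Set.Ioi (0:ℝ),
          (Real.log β + Real.log t) ^ k * t ^ (α - 1) * Real.exp (-t)) / Real.Gamma α := by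
  have h1 : (∫ z in Set.Ioi (0:ℝ), Real.log z ^ k * gammaPDF α β z)
      = β * ∫ x in Set.Ioi (0:ℝ), Real.log (β * x) ^ k * gammaPDF α β (β * x) := by
    rw [integral_comp_mul_left_Ioi (fun z => Real.log z ^ k * gammaPDF α β z) 0 hβ, mul_zero,
      smul_eq_mul, ← mul_assoc, mul_inv_cancel₀ hβ.ne', one_mul]
  rw [h1, ← integral_const_mul _, ← integral_div]
  refine setIntegral_congr_fun measurableSet_Ioi fun x hx => ?_
  have hx0 : (0:ℝ) < x := hx
  have hba : β ^ α = β ^ (α - 1) * β := by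
    nth_rewrite 1 [show α = (α - 1) + 1 by ring]
    rw [Real.rpow_add_one hβ.ne']
  have hexp : -(β * x) / β = -x := by rw [mul_comm]; field_simp
  rw [gammaPDF, Real.log_mul hβ.ne' hx0.ne', Real.mul_rpow hβ.le hx0.le, hexp, hba]
  have hΓ := (Real.Gamma_pos_of_pos hα).ne'
  have hb1 : β ^ (α - 1) ≠ 0 := (Real.rpow_pos_of_pos hβ _).ne'
  field_simp

theorem gamma_var_log (α β : ℝ) (hα : 0 < α) (hβ : 0 < β) :
    (∫ z in Set.Ioi (0 : ℝ), Real.log z ^ 2 * gammaPDF α β z) -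
      (∫ z in Set.Ioi (0 : ℝ), Real.log z * gammaPDF α β z) ^ 2 = trigamma α := by
  have hΓpos := Real.Gamma_pos_of_pos hα
  have h1 : (∫ z in Set.Ioi (0 : ℝ), Real.log z * gammaPDF α β z)
      = (Real.log β * Real.Gamma α + G 1 α) / Real.Gamma α := by
    have h := int_eq α β hα hβ 1
    simp only [pow_one] at h
    rw [h, J1 _ hα, G0_eq_Gamma hα]
  have h2 : (∫ z in Set.Ioi (0 : ℝ), Real.log z ^ 2 * gammaPDF α β z)
      = (Real.log β ^ 2 * Real.Gamma α + 2 * Real.log β * G 1 α + G 2 α) / Real.Gamma α := by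
    rw [int_eq α β hα hβ 2, J2 _ hα, G0_eq_Gamma hα]
  rw [h1, h2, trigamma_eq hα]
  field_simp
  ring
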